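/- Let (q_α, h_α, a_α, k₁^α, k₂^α) and (q_β, h_β, a_β, k₁^β, k₂^β) be two ruled-surface Frenet frames: q, h, a : ℝ → ℝ³ differentiable, q' = k₁ h, h' = −k₁ q + k₂ a, a' = −k₂ h, with k₁^α, k₁^β positive and all curvatures continuous. Let φ : ℝ → ℝ be differentiable with k₁^α(φ(s))·φ'(s) = k₁^β(s) for all s (equal total curvatures), and suppose the ratios of curvatures agree: k₂^β(s)/k₁^β(s) = k₂^α(φ(s))/k₁^α(φ(s)) for all s. If the frames agree at one point, q_α(φ(s₀)) = q_β(s₀), h_α(φ(s₀)) = h_β(s₀), a_α(φ(s₀)) = a_β(s₀) for some s₀, then q_α(φ(s)) = q_β(s) for all s; i.e. the two ruled surfaces are similar under the variable transformation φ. -/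

import Mathlib

open Real

/-- If two ruled-surface Frenet frames have equal curvature ratios under a variable
transformation φ keeping total curvatures equal, and the frames agree at one point, then
the rulings agree everywhere: the surfaces are similar ruled surfaces under φ. -/
theorem equal_curvature_ratios_implies_similar
    (qα hα aα qβ hβ aβ : ℝ → EuclideanSpace ℝ (Fin 3)) (k₁α k₂α k₁β k₂β : ℝ → ℝ)
    (hqα : Differentiable ℝ qα) (hhα : Differentiable ℝ hα) (haα : Differentiable ℝ aα)
    (hqβ : Differentiable ℝ qβ) (hhβ : Differentiable ℝ hβ) (haβ : Differentiable ℝ aβ)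
    (hqα' : ∀ t, deriv qα t = k₁α t • hα t)
    (hhα' : ∀ t, deriv hα t = (-(k₁α t)) • qα t + k₂α t • aα t)
    (haα' : ∀ t, deriv aα t = (-(k₂α t)) • hα t)
    (hqβ' : ∀ s, deriv qβ s = k₁β s • hβ s)
    (hhβ' : ∀ s, deriv hβ s = (-(k₁β s)) • qβ s + k₂β s • aβ s)
    (haβ' : ∀ s, deriv aβ s = (-(k₂β s)) • hβ s)
    (hk₁α : ∀ t, 0 < k₁α t) (hk₁β : ∀ s, 0 < k₁β s)
    (hk₁αc : Continuous k₁α) (hk₂αc : Continuous k₂α)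
    (hk₁βc : Continuous k₁β) (hk₂βc : Continuous k₂β)
    (φ : ℝ → ℝ) (hφ : Differentiable ℝ φ)
    (htotal : ∀ s, k₁α (φ s) * deriv φ s = k₁β s)
    (hratio : ∀ s, k₂β s / k₁β s = k₂α (φ s) / k₁α (φ s))
    (s₀ : ℝ) (hq₀ : qα (φ s₀) = qβ s₀) (hh₀ : hα (φ s₀) = hβ s₀)
    (ha₀ : aα (φ s₀) = aβ s₀) :
    ∀ s, qα (φ s) = qβ s := by
  -- k₂β s = k₂α (φ s) * deriv φ s
  have hk2 : ∀ s, k₂α (φ s) * deriv φ s = k₂β s := by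
    intro s
    have h1 := hratio s
    have h2 := htotal s
    have hαne : k₁α (φ s) ≠ 0 := (hk₁α (φ s)).ne'
    have hβne : k₁β s ≠ 0 := (hk₁β s).ne'
    field_simp at h1
    rw [← h2] at h1
    apply mul_left_cancel₀ hαne
    linear_combination -h1
  set dq : ℝ → EuclideanSpace ℝ (Fin 3) := fun s => qα (φ s) - qβ s with hdq
  set dh : ℝ → EuclideanSpace ℝ (Fin 3) := fun s => hα (φ s) - hβ s with hdh
  set da : ℝ → EuclideanSpace ℝ (Fin 3) := fun s => aα (φ s) - aβ s with hda
  have hDq : ∀ s, HasDerivAt dq (k₁β s • dh s) s := by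
    intro s
    have h1 : HasDerivAt (fun s => qα (φ s)) (deriv φ s • (k₁α (φ s) • hα (φ s))) s := by
      have := (hqα (φ s)).hasDerivAt
      rw [hqα'] at this
      exact this.scomp s (hφ s).hasDerivAt
    have h2 : HasDerivAt qβ (k₁β s • hβ s) s := by
      have := (hqβ s).hasDerivAt
      rwa [hqβ'] at this
    have := h1.sub h2
    rw [smul_smul, mul_comm, htotal s, ← smul_sub] at this
    exact this
  have hDh : ∀ s, HasDerivAt dh ((-(k₁β s)) • dq s + k₂β s • da s) s := by
    intro s
    have h1 : HasDerivAt (fun s => hα (φ s))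
        (deriv φ s • ((-(k₁α (φ s))) • qα (φ s) + k₂α (φ s) • aα (φ s))) s := by
      have := (hhα (φ s)).hasDerivAt
      rw [hhα'] at this
      exact this.scomp s (hφ s).hasDerivAt
    have h2 : HasDerivAt hβ ((-(k₁β s)) • qβ s + k₂β s • aβ s) s := by
      have := (hhβ s).hasDerivAt
      rwa [hhβ'] at this
    have h3 := h1.sub h2
    have e : deriv φ s • ((-(k₁α (φ s))) • qα (φ s) + k₂α (φ s) • aα (φ s))
        - ((-(k₁β s)) • qβ s + k₂β s • aβ s)
        = (-(k₁β s)) • dq s + k₂β s • da s := by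
      rw [← htotal s, ← hk2 s]
      simp only [hdq, hdh, hda, smul_add, smul_smul, smul_sub]
      module
    rwa [e] at h3
  have hDa : ∀ s, HasDerivAt da ((-(k₂β s)) • dh s) s := by
    intro s
    have h1 : HasDerivAt (fun s => aα (φ s)) (deriv φ s • ((-(k₂α (φ s))) • hα (φ s))) s := by
      have := (haα (φ s)).hasDerivAt
      rw [haα'] at this
      exact this.scomp s (hφ s).hasDerivAt
    have h2 : HasDerivAt aβ ((-(k₂β s)) • hβ s) s := by
      have := (haβ s).hasDerivAt
      rwa [haβ'] at this
    have h3 := h1.sub h2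
    have e : deriv φ s • ((-(k₂α (φ s))) • hα (φ s)) - (-(k₂β s)) • hβ s
        = (-(k₂β s)) • dh s := by
      have h4 : deriv φ s * -(k₂α (φ s)) = -(k₂β s) := by rw [← hk2 s]; ring
      rw [smul_smul, h4]
      simp only [hdh, smul_sub]
    rwa [e] at h3
  set f : ℝ → ℝ := fun s =>
    inner ℝ (dq s) (dq s) + inner ℝ (dh s) (dh s) + inner ℝ (da s) (da s) with hf
  have hF : ∀ s, HasDerivAt f 0 s := by
    intro s
    have h1 := ((hDq s).inner ℝ (hDq s)).add ((hDh s).inner ℝ (hDh s)) |>.add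
      ((hDa s).inner ℝ (hDa s))
    refine h1.congr_deriv ?_
    simp only [real_inner_smul_left, real_inner_smul_right, inner_add_left, inner_add_right,
      inner_neg_left, inner_neg_right, real_inner_comm (dq s) (dh s),
      real_inner_comm (dh s) (da s)]
    ring
  have hconst : ∀ x y : ℝ, f x = f y :=
    is_const_of_deriv_eq_zero (fun s => (hF s).differentiableAt) (fun s => (hF s).deriv)
  have hf0 : f s₀ = 0 := by
    simp [hf, hdq, hdh, hda, hq₀, hh₀, ha₀]
  intro s
  have hfs : f s = 0 := (hconst s s₀).trans hf0
  have h1 : inner ℝ (dq s) (dq s) = (0:ℝ) := by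
    have n1 : (0:ℝ) ≤ inner ℝ (dq s) (dq s) := real_inner_self_nonneg
    have n2 : (0:ℝ) ≤ inner ℝ (dh s) (dh s) := real_inner_self_nonneg
    have n3 : (0:ℝ) ≤ inner ℝ (da s) (da s) := real_inner_self_nonneg
    simp only [hf] at hfs
    linarith
  have : dq s = 0 := by rwa [inner_self_eq_zero] at h1
  have := sub_eq_zero.mp this
  simpa [hdq] using this
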